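/- arXiv:2108.07334 — 4 statements merged into one kernel-verified Lean document; each statement's English description precedes it below -/
import Mathlib

section
/- For every ε ∈ (0,1) there exist constants C_ε, K_ε and n₀ such that the following holds for all n ≥ n₀. Let q ≥ 2C_ε√n, let G = ℤ/qℤ, let A = {a₁, …, a_n} be a multiset of elements of ℤ/qℤ such that at least εn of the a_i (counted with multiplicity) are reduced modulo q (i.e. a unit of ℤ/qℤ), and let x₁, …, x_n be iid random variables uniform on {−1, 1}. Then sup_{a ∈ ℤ/qℤ} P(a₁x₁ + ⋯ + a_nx_n = a) ≤ K_ε/√n. -/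
/-- The probability that the random walk `∑ i, A i * x i`, with `x i` iid uniform on
`{-1, 1}`, equals `a`. -/
noncomputable def pmProb {G : Type*} [AddCommGroup G] {n : ℕ} (A : Fin n → G) (a : G) : ℝ :=
  ({x : Fin n → Bool | (∑ i, (if x i then A i else -A i)) = a}.ncard : ℝ) / 2 ^ n

open Finset Real

/-- Basic cosine bound: `cos (π u) ≤ exp (-2 u²)` for `u ∈ [0, 1/2]`. -/
lemma aux_cos_le_exp {u : ℝ} (hu0 : 0 ≤ u) (hu1 : u ≤ 1/2) :
    Real.cos (Real.pi * u) ≤ Real.exp (-2 * u^2) := by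
  have hs : u ≤ Real.sin (Real.pi * u / 2) := by
    have h := Real.mul_le_sin (x := Real.pi * u / 2) (by positivity)
      (by nlinarith [Real.pi_pos])
    calc u = 2 / Real.pi * (Real.pi * u / 2) := by
            field_simp
      _ ≤ Real.sin (Real.pi * u / 2) := h
  have hcos : Real.cos (Real.pi * u) = 1 - 2 * Real.sin (Real.pi * u / 2)^2 := by
    have h1 := Real.cos_two_mul' (Real.pi * u / 2)
    have h2 := Real.sin_sq_add_cos_sq (Real.pi * u / 2)
    have : 2 * (Real.pi * u / 2) = Real.pi * u := by ring
    rw [this] at h1; nlinarith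
  have h3 : Real.cos (Real.pi * u) ≤ 1 - 2 * u^2 := by nlinarith
  have h4 : (-2 * u^2) + 1 ≤ Real.exp (-2 * u^2) := Real.add_one_le_exp _
  linarith

/-- Distance-type quantity: `min(2k, |2k-q|, 2(q-k))` where `k = y.val`. -/
def vq (q : ℕ) (y : ZMod q) : ℕ :=
  min (2 * y.val) (min (2 * (y.val : ℤ) - q).natAbs (2 * (q - y.val)))

lemma aux_abscos_le_exp {q : ℕ} [NeZero q] (y : ZMod q) :
    |Real.cos (2 * Real.pi * (y.val : ℝ) / q)| ≤
      Real.exp (-2 * ((vq q y : ℝ) / q)^2) := by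
  set k := y.val with hk
  have hkq : k < q := ZMod.val_lt y
  have hq0 : (0:ℝ) < q := by exact_mod_cast Nat.pos_of_ne_zero (NeZero.ne q)
  -- the three candidate distances (as reals, divided by q)
  have key : ∀ u : ℝ, 0 ≤ u → u ≤ 1/2 → (vq q y : ℝ) / q ≤ u →
      Real.cos (Real.pi * u) ≤ Real.exp (-2 * ((vq q y : ℝ)/q)^2) := by
    intro u hu0 hu1 hvu
    refine (aux_cos_le_exp hu0 hu1).trans (Real.exp_le_exp.mpr ?_)
    have h0 : (0:ℝ) ≤ (vq q y : ℝ)/q := by positivity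
    nlinarith
  have hvnn : (0:ℝ) ≤ (vq q y : ℝ) / q := by positivity
  have hv1 : vq q y ≤ 2 * k := by unfold vq; omega
  have hv2 : vq q y ≤ (2 * (k : ℤ) - q).natAbs := by unfold vq; omega
  have hv3 : vq q y ≤ 2 * (q - k) := by unfold vq; omega
  rcases le_or_gt (4 * k) q with hA | hA
  · -- case A : cos ≥ 0, u = 2k/q
    have hA' : (4:ℝ) * k ≤ q := by exact_mod_cast hA
    have hu : (2 * (k:ℝ)) / q ≤ 1/2 := by
      rw [div_le_div_iff₀ hq0 (by norm_num)]; linarith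
    have heq : 2 * Real.pi * (k:ℝ) / q = Real.pi * ((2 * k) / q) := by ring
    have hu0 : (0:ℝ) ≤ 2 * (k:ℝ) / q := by positivity
    have hcnn : 0 ≤ Real.cos (2 * Real.pi * (k:ℝ) / q) := by
      rw [heq]
      apply Real.cos_nonneg_of_mem_Icc
      constructor
      · nlinarith [Real.pi_pos]
      · nlinarith [Real.pi_pos]
    rw [abs_of_nonneg hcnn, heq]
    refine key _ hu0 hu ?_
    gcongr
    exact_mod_cast hv1
  · rcases le_or_gt (4 * k) (3 * q) with hB | hB
    · -- case B : u = |2k - q|/q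
      have hBl : (q:ℝ) ≤ 4 * k := by exact_mod_cast hA.le
      have hBr : (4:ℝ) * k ≤ 3 * q := by exact_mod_cast hB
      set t : ℝ := 2 * (k:ℝ) / q - 1 with ht
      have htq : t = (2 * (k:ℝ) - q) / q := by rw [ht]; field_simp
      have hts : |t| ≤ 1/2 := by
        rw [abs_le]; constructor
        · have h : (1:ℝ)/2 ≤ 2 * (k:ℝ) / q := by rw [le_div_iff₀ hq0]; nlinarith
          rw [ht]; linarith
        · have h : 2 * (k:ℝ) / q ≤ 3/2 := by rw [div_le_iff₀ hq0]; nlinarith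
          rw [ht]; linarith
      have heq : Real.cos (2 * Real.pi * (k:ℝ) / q) = - Real.cos (Real.pi * t) := by
        have h : 2 * Real.pi * (k:ℝ) / q = Real.pi * t + Real.pi := by
          rw [ht]; field_simp; ring
        rw [h, Real.cos_add_pi]
      have h1 : Real.cos (Real.pi * t) = Real.cos (Real.pi * |t|) := by
        rw [← Real.cos_abs (Real.pi * t), abs_mul, abs_of_nonneg Real.pi_pos.le]
      have h2 : 0 ≤ Real.cos (Real.pi * |t|) := by
        apply Real.cos_nonneg_of_mem_Icc
        constructor
        · nlinarith [Real.pi_pos, abs_nonneg t]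
        · nlinarith [Real.pi_pos, abs_nonneg t]
      rw [heq, abs_neg, h1, abs_of_nonneg h2]
      refine key _ (abs_nonneg t) hts ?_
      rw [htq, abs_div, abs_of_nonneg hq0.le]
      gcongr
      calc (vq q y : ℝ) ≤ ((2 * (k:ℤ) - q).natAbs : ℝ) := by exact_mod_cast hv2
        _ = |2 * (k:ℝ) - q| := by rw [Nat.cast_natAbs]; push_cast; ring_nf
    · -- case C : u = 2(q-k)/q
      have hC : (3:ℝ) * q ≤ 4 * k := by exact_mod_cast hB.le
      have hkR : (k:ℝ) ≤ q := by exact_mod_cast hkq.le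
      set u : ℝ := 2 * ((q:ℝ) - k) / q with hu
      have hu0 : 0 ≤ u := by rw [hu]; apply div_nonneg (by linarith) hq0.le
      have hu1 : u ≤ 1/2 := by rw [hu, div_le_div_iff₀ hq0 (by norm_num)]; nlinarith
      have heq : 2 * Real.pi * (k:ℝ) / q = 2 * Real.pi - Real.pi * u := by
        rw [hu]; field_simp; ring
      rw [heq, Real.cos_two_pi_sub]
      have h2 : 0 ≤ Real.cos (Real.pi * u) := by
        apply Real.cos_nonneg_of_mem_Icc
        constructor
        · nlinarith [Real.pi_pos]
        · nlinarith [Real.pi_pos]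
      rw [abs_of_nonneg h2]
      refine key _ hu0 hu1 ?_
      rw [hu]
      gcongr
      calc (vq q y : ℝ) ≤ ((2 * (q - k) : ℕ) : ℝ) := by exact_mod_cast hv3
        _ = 2 * ((q:ℝ) - k) := by push_cast [Nat.cast_sub hkq.le]; ring

lemma aux_fiber_card {q : ℕ} [NeZero q] (t : ℕ) :
    (Finset.univ.filter fun ξ : ZMod q => vq q ξ = t).card ≤ 4 := by
  have key : ∀ ξ ∈ (Finset.univ.filter fun ξ : ZMod q => vq q ξ = t),
      (2 * ((ZMod.val ξ : ℤ))) ∈ ({(t:ℤ), (q:ℤ) - t, (q:ℤ) + t, 2*(q:ℤ) - t} : Finset ℤ) := by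
    intro ξ hξ
    rw [Finset.mem_filter] at hξ
    have hv := hξ.2
    have hlt : ξ.val < q := ZMod.val_lt ξ
    unfold vq at hv
    simp only [Finset.mem_insert, Finset.mem_singleton]
    omega
  have inj : Set.InjOn (fun ξ : ZMod q => 2 * ((ZMod.val ξ : ℤ)))
      ↑(Finset.univ.filter fun ξ : ZMod q => vq q ξ = t) := by
    intro ξ₁ _ ξ₂ _ h
    simp only at h
    exact ZMod.val_injective q (by omega)
  refine (Finset.card_le_card_of_injOn _ key inj).trans ?_
  have h1 := Finset.card_insert_le (t:ℤ) ({(q:ℤ) - t, (q:ℤ) + t, 2*(q:ℤ) - t} : Finset ℤ)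
  have h2 := Finset.card_insert_le ((q:ℤ) - t) ({(q:ℤ) + t, 2*(q:ℤ) - t} : Finset ℤ)
  have h3 := Finset.card_insert_le ((q:ℤ) + t) ({2*(q:ℤ) - t} : Finset ℤ)
  have h4 : ({2*(q:ℤ) - t} : Finset ℤ).card = 1 := Finset.card_singleton _
  omega

lemma aux_sum_fiber {q : ℕ} [NeZero q] (f : ℕ → ℝ) (hf : ∀ t, 0 ≤ f t) :
    ∑ ξ : ZMod q, f (vq q ξ) ≤ 4 * ∑ t ∈ Finset.range (q+1), f t := by
  rw [Finset.sum_comp f (vq q)]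
  have step1 : ∑ b ∈ Finset.image (vq q) Finset.univ,
      (Finset.univ.filter fun ξ : ZMod q => vq q ξ = b).card • f b ≤
      ∑ b ∈ Finset.image (vq q) Finset.univ, 4 * f b := by
    apply Finset.sum_le_sum
    intro b _
    rw [nsmul_eq_mul]
    exact mul_le_mul_of_nonneg_right (by exact_mod_cast aux_fiber_card b) (hf b)
  refine step1.trans ?_
  rw [← Finset.mul_sum]
  gcongr 4 * ?_ 
  apply Finset.sum_le_sum_of_subset_of_nonneg
  · intro b hb
    rw [Finset.mem_image] at hb
    obtain ⟨ξ, _, rfl⟩ := hb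
    have hlt : ξ.val < q := ZMod.val_lt ξ
    rw [Finset.mem_range]
    unfold vq; omega
  · exact fun t _ _ => hf t

lemma aux_geo_tail {x : ℝ} (hx0 : 0 < x) (T K : ℕ) :
    ∑ t ∈ Finset.Ico (T+1) K, Real.exp (-x)^t ≤ 1 / x := by
  have hr0 : 0 < Real.exp (-x) := Real.exp_pos _
  have hr1 : Real.exp (-x) < 1 := by rw [Real.exp_lt_one_iff]; linarith
  have h1r : 0 < 1 - Real.exp (-x) := by linarith
  rw [Finset.sum_Ico_eq_sum_range]
  have hsplit : ∑ k ∈ Finset.range (K - (T+1)), Real.exp (-x) ^ (T + 1 + k) =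
      Real.exp (-x)^(T+1) * ∑ k ∈ Finset.range (K - (T+1)), Real.exp (-x) ^ k := by
    rw [Finset.mul_sum]
    exact Finset.sum_congr rfl fun k _ => by rw [pow_add]
  rw [hsplit, geom_sum_eq hr1.ne _]
  have hrw : (Real.exp (-x) ^ (K - (T+1)) - 1) / (Real.exp (-x) - 1)
      = (1 - Real.exp (-x) ^ (K - (T+1))) / (1 - Real.exp (-x)) := by
    rw [← neg_div_neg_eq]; ring_nf
  rw [hrw]
  have hnum0 : 0 ≤ 1 - Real.exp (-x) ^ (K - (T+1)) := by
    have h2 := pow_le_one₀ hr0.le hr1.le (n := K - (T+1))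
    linarith
  have hgeom : (1 - Real.exp (-x) ^ (K - (T+1))) / (1 - Real.exp (-x)) ≤ 1 / (1 - Real.exp (-x)) := by
    have h := (pow_pos hr0 (K - (T+1))).le
    exact div_le_div₀ zero_le_one (by linarith) h1r le_rfl
  have hgeom0 : 0 ≤ (1 - Real.exp (-x) ^ (K - (T+1))) / (1 - Real.exp (-x)) :=
    div_nonneg hnum0 h1r.le
  calc Real.exp (-x)^(T+1) * ((1 - Real.exp (-x) ^ (K - (T+1))) / (1 - Real.exp (-x)))
      ≤ Real.exp (-x) * (1 / (1 - Real.exp (-x))) := by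
        apply mul_le_mul _ hgeom hgeom0 hr0.le
        calc Real.exp (-x)^(T+1) ≤ Real.exp (-x)^1 :=
              pow_le_pow_of_le_one hr0.le hr1.le (by omega)
          _ = Real.exp (-x) := pow_one _
    _ ≤ 1 / x := by
        rw [mul_one_div, div_le_div_iff₀ h1r hx0]
        have hE := Real.add_one_le_exp x
        have hmul : Real.exp (-x) * Real.exp x = 1 := by
          rw [← Real.exp_add]; simp
        nlinarith [Real.exp_pos x]

lemma aux_expsum {q m : ℕ} (hq : 1 ≤ q) (hm : 1 ≤ m) :
    ∑ t ∈ Finset.range (q+1), Real.exp (-2 * m * ((t:ℝ)/q)^2) ≤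
      2 + 2 * q / Real.sqrt (2 * m) := by
  have hqR : (0:ℝ) < q := by exact_mod_cast hq
  have hmR : (0:ℝ) < m := by exact_mod_cast hm
  obtain ⟨s, hs0, hs2⟩ : ∃ s : ℝ, 0 < s ∧ s^2 = 2*m :=
    ⟨Real.sqrt (2*m), Real.sqrt_pos.mpr (by positivity), Real.sq_sqrt (by positivity)⟩
  have hsval : s = Real.sqrt (2*m) := by
    have := Real.sqrt_eq_iff_mul_self_eq_of_pos (x := 2*m) hs0
    nlinarith [Real.sq_sqrt (by positivity : (0:ℝ) ≤ 2*m),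
      Real.sqrt_pos.mpr (by positivity : (0:ℝ) < 2*(m:ℝ)), sq_nonneg (s - Real.sqrt (2*m))]
  obtain ⟨T, hT1, hT2⟩ : ∃ T : ℕ, (q:ℝ)/s ≤ T ∧ (T:ℝ) < (q:ℝ)/s + 1 :=
    ⟨⌈(q:ℝ)/s⌉₊, Nat.le_ceil _, Nat.ceil_lt_add_one (by positivity)⟩
  obtain ⟨x, hxdef, hxs⟩ : ∃ x : ℝ, x = 2*(m:ℝ)/(q:ℝ)^2 * T ∧ s/q ≤ x := by
    refine ⟨2*(m:ℝ)/(q:ℝ)^2 * T, rfl, ?_⟩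
    have h1 : s / q = 2*(m:ℝ)/(q:ℝ)^2 * ((q:ℝ)/s) := by
      field_simp
      nlinarith
    rw [h1]
    apply mul_le_mul_of_nonneg_left hT1 (by positivity)
  have hx0 : 0 < x := lt_of_lt_of_le (by positivity) hxs
  have step1 : ∑ t ∈ Finset.range (q+1), Real.exp (-2 * m * ((t:ℝ)/q)^2) ≤
      ∑ t ∈ Finset.range (q+1), (if t ≤ T then (1:ℝ) else Real.exp (-x)^t) := by
    apply Finset.sum_le_sum
    intro t _
    by_cases h : t ≤ T
    · simp only [h, if_true]
      apply Real.exp_le_one_iff.mpr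
      have : (0:ℝ) ≤ ((t:ℝ)/q)^2 := sq_nonneg _
      nlinarith
    · simp only [h, if_false]
      rw [← Real.exp_nat_mul]
      apply Real.exp_le_exp.mpr
      have hTt : (T:ℝ) ≤ (t:ℝ) := by exact_mod_cast le_of_not_ge h
      have ht0 : (0:ℝ) ≤ t := Nat.cast_nonneg t
      have expand : -2 * m * ((t:ℝ)/q)^2 = -(2*(m:ℝ)/(q:ℝ)^2 * t * t) := by
        field_simp
      rw [expand, hxdef]
      have key : 2*(m:ℝ)/(q:ℝ)^2 * T * t ≤ 2*(m:ℝ)/(q:ℝ)^2 * t * t := by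
        have hco : (0:ℝ) ≤ 2*(m:ℝ)/(q:ℝ)^2 := by positivity
        nlinarith [mul_nonneg (mul_nonneg hco (sub_nonneg.mpr hTt)) ht0]
      nlinarith
  refine step1.trans ?_
  rw [Finset.sum_ite]
  have head : ∑ _t ∈ (Finset.range (q+1)).filter (fun t => t ≤ T), (1:ℝ) ≤ T + 1 := by
    rw [Finset.sum_const, nsmul_eq_mul, mul_one]
    have hsub : (Finset.range (q+1)).filter (fun t => t ≤ T) ⊆ Finset.range (T+1) := by
      intro t ht
      simp only [Finset.mem_filter, Finset.mem_range] at ht ⊢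
      omega
    have := Finset.card_le_card hsub
    rw [Finset.card_range] at this
    exact_mod_cast this
  have tail : ∑ t ∈ (Finset.range (q+1)).filter (fun t => ¬ t ≤ T), Real.exp (-x)^t ≤ 1 / x := by
    have hsub : (Finset.range (q+1)).filter (fun t => ¬ t ≤ T) ⊆ Finset.Ico (T+1) (q+1) := by
      intro t ht
      simp only [Finset.mem_filter, Finset.mem_range] at ht
      rw [Finset.mem_Ico]; omega
    refine (Finset.sum_le_sum_of_subset_of_nonneg hsub
      (fun t _ _ => (pow_pos (Real.exp_pos _) t).le)).trans ?_
    exact aux_geo_tail hx0 T (q+1)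
  have hxq : 1 / x ≤ q / s := by
    rw [div_le_div_iff₀ hx0 hs0]
    have h := mul_le_mul_of_nonneg_left hxs (le_of_lt hqR)
    calc 1 * s = s := one_mul s
      _ = (q:ℝ) * (s / q) := by field_simp
      _ ≤ (q:ℝ) * x := h
  have hTq : (T:ℝ) + 1 ≤ q / s + 2 := by linarith
  rw [← hsval]
  calc (∑ _t ∈ (Finset.range (q+1)).filter (fun t => t ≤ T), (1:ℝ)) +
        ∑ t ∈ (Finset.range (q+1)).filter (fun t => ¬ t ≤ T), Real.exp (-x)^t
      ≤ ((T:ℝ) + 1) + 1 / x := add_le_add head tail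
    _ ≤ (q / s + 2) + q / s := add_le_add hTq hxq
    _ = 2 + 2 * q / s := by ring

lemma aux_map_sum {A : Type*} [AddCommMonoid A] {M : Type*} [CommMonoid M]
    (ψ : AddChar A M) {ι : Type*} (s : Finset ι) (f : ι → A) :
    ψ (∑ i ∈ s, f i) = ∏ i ∈ s, ψ (f i) := by
  classical
  induction s using Finset.cons_induction with
  | empty => simp
  | cons i s hi ih => rw [Finset.sum_cons, Finset.prod_cons, AddChar.map_add_eq_mul, ih]

lemma aux_char_sum {q : ℕ} [NeZero q] (y : ZMod q) :
    ∑ ξ : ZMod q, ZMod.stdAddChar (ξ * y) = if y = 0 then (q:ℂ) else 0 := by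
  split_ifs with h
  · simp only [h, mul_zero, AddChar.map_zero_eq_one, Finset.sum_const, Finset.card_univ,
      ZMod.card, nsmul_eq_mul, mul_one]
  · rw [Finset.sum_congr rfl (fun ξ _ => by rw [mul_comm])]
    exact AddChar.sum_eq_zero_of_ne_one (ZMod.isPrimitive_stdAddChar q h)

lemma aux_char_cos {q : ℕ} [NeZero q] (y : ZMod q) :
    ZMod.stdAddChar y + ZMod.stdAddChar (-y) =
      ((2 * Real.cos (2 * Real.pi * (y.val : ℝ) / q) : ℝ) : ℂ) := by
  have h1 : ZMod.stdAddChar (N := q) y =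
      Complex.exp (((2 * Real.pi * (y.val : ℝ) / q : ℝ) : ℂ) * Complex.I) := by
    rw [ZMod.stdAddChar_apply, ZMod.toCircle_apply]
    congr 1
    push_cast
    ring
  have h2 : ZMod.stdAddChar (N := q) (-y) =
      Complex.exp (-(((2 * Real.pi * (y.val : ℝ) / q : ℝ) : ℂ) * Complex.I)) := by
    rw [AddChar.map_neg_eq_inv, h1, ← Complex.exp_neg]
  rw [h1, h2, ← neg_mul, Complex.exp_mul_I, Complex.exp_mul_I]
  simp only [Complex.cos_neg, Complex.sin_neg]
  push_cast [Complex.ofReal_cos]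
  ring

lemma aux_main_id {q : ℕ} [NeZero q] {n : ℕ} (A : Fin n → ZMod q) (a : ZMod q) :
    (q : ℂ) * ((Finset.univ.filter fun x : Fin n → Bool =>
        (∑ i, (if x i then A i else -A i)) = a).card : ℂ) =
      ∑ ξ : ZMod q, ZMod.stdAddChar (-(ξ * a)) *
        ∏ i, (ZMod.stdAddChar (ξ * A i) + ZMod.stdAddChar (-(ξ * A i))) := by
  have expand : ∀ ξ : ZMod q,
      ∏ i, (ZMod.stdAddChar (ξ * A i) + ZMod.stdAddChar (-(ξ * A i)))
      = ∑ x : Fin n → Bool, ZMod.stdAddChar (ξ * ∑ i, (if x i then A i else -A i)) := by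
    intro ξ
    have h1 : ∀ i : Fin n, ZMod.stdAddChar (ξ * A i) + ZMod.stdAddChar (-(ξ * A i))
        = ∑ b : Bool, ZMod.stdAddChar (ξ * (if b then A i else -A i)) := by
      intro i
      rw [Fintype.sum_bool]
      simp [mul_neg]
    simp_rw [h1]
    rw [Finset.prod_univ_sum, Fintype.piFinset_univ]
    apply Finset.sum_congr rfl
    intro x _
    rw [Finset.mul_sum, aux_map_sum]
  rw [eq_comm]
  calc ∑ ξ : ZMod q, ZMod.stdAddChar (-(ξ * a)) *
        ∏ i, (ZMod.stdAddChar (ξ * A i) + ZMod.stdAddChar (-(ξ * A i)))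
      = ∑ ξ : ZMod q, ∑ x : Fin n → Bool,
          ZMod.stdAddChar (ξ * ((∑ i, (if x i then A i else -A i)) - a)) := by
        apply Finset.sum_congr rfl
        intro ξ _
        rw [expand, Finset.mul_sum]
        apply Finset.sum_congr rfl
        intro x _
        rw [← AddChar.map_add_eq_mul]
        congr 1
        ring
    _ = ∑ x : Fin n → Bool, ∑ ξ : ZMod q,
          ZMod.stdAddChar (ξ * ((∑ i, (if x i then A i else -A i)) - a)) := Finset.sum_comm
    _ = ∑ x : Fin n → Bool,
          if (∑ i, (if x i then A i else -A i)) - a = 0 then (q:ℂ) else 0 := by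
        exact Finset.sum_congr rfl fun x _ => aux_char_sum _
    _ = (q : ℂ) * ((Finset.univ.filter fun x : Fin n → Bool =>
          (∑ i, (if x i then A i else -A i)) = a).card : ℂ) := by
        simp_rw [sub_eq_zero]
        rw [Finset.sum_ite, Finset.sum_const, Finset.sum_const_zero, add_zero, nsmul_eq_mul]
        ring

/-- |cos(2π y.val / q)| -/
noncomputable def cabs (q : ℕ) (y : ZMod q) : ℝ := |Real.cos (2 * Real.pi * (y.val : ℝ) / q)|

lemma cabs_nonneg (q : ℕ) (y : ZMod q) : 0 ≤ cabs q y := abs_nonneg _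

lemma cabs_le_one (q : ℕ) (y : ZMod q) : cabs q y ≤ 1 := by
  unfold cabs
  rw [abs_le]
  exact ⟨Real.neg_one_le_cos _, Real.cos_le_one _⟩

lemma aux_sum_unit {q : ℕ} [NeZero q] {u : ZMod q} (hu : IsUnit u) (f : ZMod q → ℝ) :
    ∑ ξ : ZMod q, f (ξ * u) = ∑ ξ : ZMod q, f ξ :=
  Fintype.sum_bijective (· * u) (IsUnit.isUnit_iff_mulRight_bijective.mp hu)
    (fun ξ => f (ξ * u)) f (fun _ => rfl)

lemma aux_amgm {ι : Type*} (U : Finset ι) (hU : U.Nonempty) (g : ι → ℝ)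
    (hg : ∀ i ∈ U, 0 ≤ g i) :
    ∏ i ∈ U, g i ≤ (1 / (U.card : ℝ)) * ∑ i ∈ U, g i ^ (U.card : ℕ) := by
  have hm : (0:ℝ) < U.card := by exact_mod_cast Finset.card_pos.mpr hU
  have h := Real.geom_mean_le_arith_mean_weighted U (fun _ => 1/(U.card:ℝ))
      (fun i => g i ^ (U.card : ℕ)) (fun i _ => one_div_nonneg.mpr (Nat.cast_nonneg _))
      (by rw [Finset.sum_const, nsmul_eq_mul]; field_simp) (fun i hi => pow_nonneg (hg i hi) _)
  rw [Finset.mul_sum]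
  refine le_trans (le_of_eq ?_) h
  apply Finset.prod_congr rfl
  intro i hi
  show g i = (g i ^ (U.card : ℕ)) ^ ((1:ℝ)/(U.card:ℝ))
  rw [← Real.rpow_natCast (g i) U.card, ← Real.rpow_mul (hg i hi), mul_one_div,
    div_self hm.ne', Real.rpow_one]

set_option maxHeartbeats 1000000 in
lemma aux_bound3 {q m : ℕ} [NeZero q] (hq : 1 ≤ q) (hm : 1 ≤ m) :
    ∑ ξ : ZMod q, cabs q ξ ^ m ≤ 8 + 8 * q / Real.sqrt (2 * m) := by
  have step : ∀ ξ : ZMod q, cabs q ξ ^ m ≤ Real.exp (-2 * m * ((vq q ξ : ℝ)/q)^2) := by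
    intro ξ
    have h := aux_abscos_le_exp ξ
    have h2 : cabs q ξ ^ m ≤ Real.exp (-2 * ((vq q ξ:ℝ)/q)^2) ^ m := by
      gcongr
      · exact cabs_nonneg q ξ
      · exact h
    refine h2.trans (le_of_eq ?_)
    rw [← Real.exp_nat_mul]
    congr 1; ring
  calc ∑ ξ : ZMod q, cabs q ξ ^ m
      ≤ ∑ ξ : ZMod q, Real.exp (-2 * m * ((vq q ξ:ℝ)/q)^2) :=
        Finset.sum_le_sum (fun ξ _ => step ξ)
    _ ≤ 4 * ∑ t ∈ Finset.range (q+1), Real.exp (-2*(m:ℝ)*((t:ℝ)/q)^2) :=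
        aux_sum_fiber (fun t : ℕ => Real.exp (-2*(m:ℝ)*((t:ℝ)/q)^2)) (fun t => (Real.exp_pos _).le)
    _ ≤ 4 * (2 + 2*q/Real.sqrt (2*m)) :=
        mul_le_mul_of_nonneg_left (aux_expsum hq hm) (by norm_num)
    _ = 8 + 8*q/Real.sqrt (2*m) := by ring

lemma aux_char_abs {q : ℕ} [NeZero q] (y : ZMod q) :
    ‖(ZMod.stdAddChar y : ℂ)‖ = 1 := by
  rw [ZMod.stdAddChar_apply]
  exact Circle.norm_coe _

lemma aux_bound1 {q : ℕ} [NeZero q] {n : ℕ} (A : Fin n → ZMod q) (a : ZMod q) :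
    (q:ℝ) * ((Finset.univ.filter fun x : Fin n → Bool =>
        (∑ i, (if x i then A i else -A i)) = a).card : ℝ)
    ≤ 2^n * ∑ ξ : ZMod q, ∏ i, cabs q (ξ * A i) := by
  have h := aux_main_id A a
  have hqn : (0:ℝ) ≤ (q:ℝ) * ((Finset.univ.filter fun x : Fin n → Bool =>
      (∑ i, (if x i then A i else -A i)) = a).card : ℝ) := by positivity
  calc (q:ℝ) * ((Finset.univ.filter fun x : Fin n → Bool =>
        (∑ i, (if x i then A i else -A i)) = a).card : ℝ)
      = ‖((q : ℂ) * ((Finset.univ.filter fun x : Fin n → Bool =>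
          (∑ i, (if x i then A i else -A i)) = a).card : ℂ))‖ := by
        rw [norm_mul]
        rw [Complex.norm_natCast, Complex.norm_natCast]
    _ = ‖(∑ ξ : ZMod q, ZMod.stdAddChar (-(ξ * a)) *
          ∏ i, (ZMod.stdAddChar (ξ * A i) + ZMod.stdAddChar (-(ξ * A i))))‖ := by rw [h]
    _ ≤ ∑ ξ : ZMod q, ‖(ZMod.stdAddChar (-(ξ * a)) *
          ∏ i, (ZMod.stdAddChar (ξ * A i) + ZMod.stdAddChar (-(ξ * A i))))‖ :=
        norm_sum_le _ _
    _ = ∑ ξ : ZMod q, ∏ i, (2 * cabs q (ξ * A i)) := by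
        apply Finset.sum_congr rfl
        intro ξ _
        rw [norm_mul, aux_char_abs, one_mul, norm_prod]
        apply Finset.prod_congr rfl
        intro i _
        rw [aux_char_cos, Complex.norm_real, Real.norm_eq_abs, abs_mul, abs_two]
        rfl
    _ = 2^n * ∑ ξ : ZMod q, ∏ i, cabs q (ξ * A i) := by
        rw [Finset.mul_sum]
        apply Finset.sum_congr rfl
        intro ξ _
        rw [Finset.prod_mul_distrib, Finset.prod_const, Finset.card_univ, Fintype.card_fin]

lemma aux_bound2 {q : ℕ} [NeZero q] {n : ℕ} (A : Fin n → ZMod q)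
    (hU : (Finset.univ.filter fun i : Fin n => IsUnit (A i)).Nonempty) :
    ∑ ξ : ZMod q, ∏ i, cabs q (ξ * A i) ≤
      ∑ ξ : ZMod q, cabs q ξ ^ ((Finset.univ.filter fun i : Fin n => IsUnit (A i)).card) := by
  set U := Finset.univ.filter fun i : Fin n => IsUnit (A i) with hUdef
  set m := U.card with hmdef
  have hm0 : (0:ℝ) < m := by exact_mod_cast Finset.card_pos.mpr hU
  have step1 : ∀ ξ : ZMod q, ∏ i, cabs q (ξ * A i) ≤ ∏ i ∈ U, cabs q (ξ * A i) := by
    intro ξ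
    rw [← Finset.prod_sdiff (Finset.subset_univ U)]
    have h1 : ∏ i ∈ Finset.univ \ U, cabs q (ξ * A i) ≤ 1 :=
      Finset.prod_le_one (fun i _ => cabs_nonneg _ _) (fun i _ => cabs_le_one _ _)
    have h2 : (0:ℝ) ≤ ∏ i ∈ U, cabs q (ξ * A i) :=
      Finset.prod_nonneg (fun i _ => cabs_nonneg _ _)
    nlinarith [Finset.prod_nonneg (fun i (_ : i ∈ Finset.univ \ U) => cabs_nonneg q (ξ * A i))]
  have step2 : ∀ ξ : ZMod q, ∏ i ∈ U, cabs q (ξ * A i) ≤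
      (1/(m:ℝ)) * ∑ i ∈ U, cabs q (ξ * A i) ^ m :=
    fun ξ => aux_amgm U hU _ (fun i _ => cabs_nonneg _ _)
  calc ∑ ξ : ZMod q, ∏ i, cabs q (ξ * A i)
      ≤ ∑ ξ : ZMod q, (1/(m:ℝ)) * ∑ i ∈ U, cabs q (ξ * A i) ^ m :=
        Finset.sum_le_sum (fun ξ _ => (step1 ξ).trans (step2 ξ))
    _ = (1/(m:ℝ)) * ∑ i ∈ U, ∑ ξ : ZMod q, cabs q (ξ * A i) ^ m := by
        rw [← Finset.mul_sum, Finset.sum_comm]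
    _ = (1/(m:ℝ)) * ∑ i ∈ U, ∑ ξ : ZMod q, cabs q ξ ^ m := by
        congr 1
        apply Finset.sum_congr rfl
        intro i hi
        have hunit : IsUnit (A i) := by
          rw [hUdef] at hi
          exact (Finset.mem_filter.mp hi).2
        exact aux_sum_unit hunit (fun y => cabs q y ^ m)
    _ = ∑ ξ : ZMod q, cabs q ξ ^ m := by
        rw [Finset.sum_const, nsmul_eq_mul, ← mul_assoc, ← hmdef]
        rw [one_div, inv_mul_cancel₀ hm0.ne', one_mul]

theorem stmt3 (ε : ℝ) (hε0 : 0 < ε) (hε1 : ε < 1) :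
    ∃ (Cε Kε : ℝ) (n₀ : ℕ), 0 < Cε ∧ 0 < Kε ∧ ∀ n : ℕ, n₀ ≤ n →
      ∀ q : ℕ, 2 * Cε * Real.sqrt n ≤ (q : ℝ) →
        ∀ A : Fin n → ZMod q,
          ε * n ≤ ({i : Fin n | IsUnit (A i)}.ncard : ℝ) →
          ∀ a : ZMod q, pmProb A a ≤ Kε / Real.sqrt n := by
  have hsqε : 0 < Real.sqrt ε := Real.sqrt_pos.mpr hε0
  have hsq2 : 0 < Real.sqrt 2 := Real.sqrt_pos.mpr (by norm_num)
  refine ⟨1, 4 + 8/(Real.sqrt 2 * Real.sqrt ε), max 1 ⌈ε⁻¹⌉₊, one_pos, by positivity, ?_⟩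
  intro n hn q hq A hA a
  have hn1 : 1 ≤ n := le_trans (le_max_left _ _) hn
  have hnR : (1:ℝ) ≤ n := by exact_mod_cast hn1
  have hsn : 1 ≤ Real.sqrt n := by
    rw [show (1:ℝ) = Real.sqrt 1 by simp]
    exact Real.sqrt_le_sqrt hnR
  have hsn0 : 0 < Real.sqrt n := by linarith
  have hq2 : (2:ℝ) ≤ q := by nlinarith
  have hqR0 : (0:ℝ) < q := by linarith
  have hqnat : 1 ≤ q := by exact_mod_cast le_trans (by norm_num : (1:ℝ) ≤ 2) hq2
  haveI : NeZero q := ⟨by omega⟩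
  have hncard : ({i : Fin n | IsUnit (A i)}.ncard) =
      (Finset.univ.filter fun i : Fin n => IsUnit (A i)).card := by
    rw [Set.ncard_eq_toFinset_card', Set.toFinset_setOf]
  rw [hncard] at hA
  set U := Finset.univ.filter fun i : Fin n => IsUnit (A i) with hUdef
  have hεn1 : (1:ℝ) ≤ ε * n := by
    have h1 : (⌈ε⁻¹⌉₊ : ℝ) ≤ n := by exact_mod_cast le_trans (le_max_right _ _) hn
    have h2 : ε⁻¹ ≤ n := le_trans (Nat.le_ceil _) h1
    calc (1:ℝ) = ε * ε⁻¹ := by field_simp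
      _ ≤ ε * n := mul_le_mul_of_nonneg_left h2 hε0.le
  have hm1 : 1 ≤ U.card := by
    have h : (1:ℝ) ≤ (U.card:ℝ) := le_trans hεn1 hA
    exact_mod_cast h
  have hUne : U.Nonempty := Finset.card_pos.mp hm1
  set N := (Finset.univ.filter fun x : Fin n → Bool =>
      (∑ i, (if x i then A i else -A i)) = a).card with hNdef
  have hpm : pmProb A a = (N:ℝ) / 2^n := by
    unfold pmProb
    congr 2
    rw [Set.ncard_eq_toFinset_card', Set.toFinset_setOf]
  have hb1 := aux_bound1 A a
  have hb2 := aux_bound2 A hUne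
  have hb3 := aux_bound3 (q := q) (m := U.card) hqnat hm1
  have hchain : (q:ℝ) * N ≤ 2^n * (8 + 8*q/Real.sqrt (2*U.card)) :=
    hb1.trans (mul_le_mul_of_nonneg_left (hb2.trans hb3) (by positivity))
  have h2n0 : (0:ℝ) < 2^n := by positivity
  have hs0 : 0 < Real.sqrt (2*(U.card:ℝ)) := Real.sqrt_pos.mpr (by positivity)
  have hfinal : pmProb A a ≤ 8/q + 8/Real.sqrt (2*(U.card:ℝ)) := by
    rw [hpm, div_le_iff₀ h2n0]
    have heq : (8/(q:ℝ) + 8/Real.sqrt (2*(U.card:ℝ))) * 2^n =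
        (2^n * (8 + 8*(q:ℝ)/Real.sqrt (2*(U.card:ℝ))))/q := by
      field_simp
    rw [heq, le_div_iff₀ hqR0]
    calc (N:ℝ) * q = q * N := mul_comm _ _
      _ ≤ _ := hchain
  refine hfinal.trans ?_
  have h8q : 8/(q:ℝ) ≤ 4/Real.sqrt n := by
    rw [div_le_div_iff₀ hqR0 hsn0]
    nlinarith
  have hsm : Real.sqrt 2 * Real.sqrt ε * Real.sqrt n ≤ Real.sqrt (2*(U.card:ℝ)) := by
    have h2 : Real.sqrt (2*(ε*n)) ≤ Real.sqrt (2*(U.card:ℝ)) :=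
      Real.sqrt_le_sqrt (by linarith)
    have h3 : Real.sqrt (2*(ε*(n:ℝ))) = Real.sqrt 2 * Real.sqrt ε * Real.sqrt n := by
      rw [Real.sqrt_mul (by norm_num), Real.sqrt_mul hε0.le]
      ring
    linarith [h3 ▸ h2]
  have h8m : 8/Real.sqrt (2*(U.card:ℝ)) ≤ (8/(Real.sqrt 2 * Real.sqrt ε))/Real.sqrt n := by
    rw [div_div]
    apply div_le_div_of_nonneg_left (by norm_num) (by positivity) hsm
  calc 8/(q:ℝ) + 8/Real.sqrt (2*(U.card:ℝ)) ≤ 4/Real.sqrt n + (8/(Real.sqrt 2 * Real.sqrt ε))/Real.sqrt n :=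
        add_le_add h8q h8m
    _ = (4 + 8/(Real.sqrt 2 * Real.sqrt ε))/Real.sqrt n := by
        rw [← add_div]
end

section
/- Let G be an abelian group, let X ⊆ G with 0 ∈ X, let k be a positive integer, let H be a finite subgroup of G, and let P = {x₁a₁ + ⋯ + x_d a_d : x_i ∈ ℤ, |x_i| ≤ N_i} be a symmetric GAP such that the coset-progression H + P is 2-proper and kX ⊆ H + P, where kX is the k-fold iterated sumset of X. Then X ⊆ H + {x₁a₁ + ⋯ + x_d a_d : x_i ∈ ℤ, |x_i| ≤ 2N_i/k}. -/
open Pointwise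

/-- A generalized arithmetic progression (GAP) of rank `r` in an additive abelian group,
given by its generators and dimensions. -/
structure GAPData (G : Type*) [AddCommGroup G] (r : ℕ) where
  g₀ : G
  g : Fin r → G
  N : Fin r → ℤ
  N' : Fin r → ℤ
  hle : ∀ i, N i ≤ N' i

namespace GAPData

variable {G : Type*} [AddCommGroup G] {r : ℕ}

/-- The set of elements of the GAP. -/
def toSet (P : GAPData G r) : Set G :=
  {x | ∃ m : Fin r → ℤ, (∀ i, P.N i ≤ m i ∧ m i ≤ P.N' i) ∧ x = P.g₀ + ∑ i, m i • P.g i}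

/-- A GAP is proper if every element has a unique representation. -/
def IsProper (P : GAPData G r) : Prop :=
  ∀ m m' : Fin r → ℤ, (∀ i, P.N i ≤ m i ∧ m i ≤ P.N' i) →
    (∀ i, P.N i ≤ m' i ∧ m' i ≤ P.N' i) →
    P.g₀ + ∑ i, m i • P.g i = P.g₀ + ∑ i, m' i • P.g i → m = m'

/-- A GAP is symmetric if `g₀ = 0` and `N i = -N' i` for all `i`. -/
def IsSymmetric (P : GAPData G r) : Prop :=
  P.g₀ = 0 ∧ ∀ i, P.N i = -P.N' i

/-- The `t`-fold dilate `P_t` of a GAP, whose dimensions are multiplied by `t`. -/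
def dilate (P : GAPData G r) (t : ℕ) : GAPData G r where
  g₀ := P.g₀
  g := P.g
  N := fun i => (t : ℤ) * P.N i
  N' := fun i => (t : ℤ) * P.N' i
  hle := fun i => mul_le_mul_of_nonneg_left (P.hle i) (Int.natCast_nonneg t)

end GAPData

/-- `H + P` is a proper coset-progression: `H` is a finite subgroup, `P` is a proper GAP and
`|H + P| = |H| * |P|`. -/
def IsProperCosetProg {G : Type*} [AddCommGroup G] {r : ℕ}
    (H : AddSubgroup G) (P : GAPData G r) : Prop :=
  (H : Set G).Finite ∧ P.IsProper ∧
    ((H : Set G) + P.toSet).ncard = (H : Set G).ncard * P.toSet.ncard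

/-- A symmetric coset-progression `H + P` is `t`-proper if `H + P_t` is proper. -/
def IsTProperCosetProg {G : Type*} [AddCommGroup G] (t : ℕ) {r : ℕ}
    (H : AddSubgroup G) (P : GAPData G r) : Prop :=
  IsProperCosetProg H (P.dilate t)

/-- The `k`-fold iterated sumset `kX = X + ⋯ + X`. -/
def iterSumset {G : Type*} [AddCommGroup G] : ℕ → Set G → Set G
  | 0, _ => {0}
  | k + 1, X => X + iterSumset k X


lemma zero_mem_iterSumset {G : Type*} [AddCommGroup G] {X : Set G} (h0 : (0:G) ∈ X) :
    ∀ k, (0:G) ∈ iterSumset k X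
  | 0 => by simp [iterSumset]
  | k+1 => by
    have h := zero_mem_iterSumset h0 k
    exact ⟨0, h0, 0, h, by simp⟩

lemma smul_mem_iterSumset {G : Type*} [AddCommGroup G] {X : Set G} (h0 : (0:G) ∈ X)
    {x : G} (hx : x ∈ X) : ∀ k j, j ≤ k → (j:ℤ) • x ∈ iterSumset k X
  | 0, 0, _ => by simp [iterSumset]
  | 0, _+1, hj => absurd hj (by omega)
  | k+1, 0, _ => by simpa using zero_mem_iterSumset h0 (k+1)
  | k+1, j+1, hj => by
    have h1 := smul_mem_iterSumset h0 hx k j (by omega)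
    refine ⟨x, hx, (j:ℤ) • x, h1, ?_⟩
    push_cast
    rw [add_smul, one_smul]
    abel

lemma key_unique {G : Type*} [AddCommGroup G] {d : ℕ} {H : AddSubgroup G} {P : GAPData G d}
    (hsym : P.IsSymmetric) (h2 : IsTProperCosetProg 2 H P)
    {h h' : G} (hh : h ∈ H) (hh' : h' ∈ H) {m m' : Fin d → ℤ}
    (hm : ∀ i, |m i| ≤ 2 * P.N' i) (hm' : ∀ i, |m' i| ≤ 2 * P.N' i)
    (heq : h + ∑ i, m i • P.g i = h' + ∑ i, m' i • P.g i) : m = m' ∧ h = h' := by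
  classical
  obtain ⟨Hfin, Qprop, hcard⟩ := h2
  set Q := P.dilate 2 with hQ
  have hg0 : Q.g₀ = 0 := hsym.1
  have hQN : ∀ i, Q.N i = -(2 * P.N' i) := fun i => by
    show (2:ℤ) * P.N i = _; rw [hsym.2 i]; ring
  have hQN' : ∀ i, Q.N' i = 2 * P.N' i := fun i => rfl
  have hmemQ : ∀ (n : Fin d → ℤ), (∀ i, |n i| ≤ 2 * P.N' i) →
      (∑ i, n i • P.g i) ∈ Q.toSet := by
    intro n hn
    refine ⟨n, fun i => ?_, ?_⟩
    · rw [hQN i, hQN' i]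
      exact abs_le.mp (hn i)
    · rw [hg0, zero_add]
      rfl
  have hQfin : Q.toSet.Finite := by
    have hsubQ : Q.toSet ⊆ (fun n : Fin d → ℤ => Q.g₀ + ∑ i, n i • Q.g i) '' (Set.Icc Q.N Q.N') := by
      rintro y ⟨n, hn, rfl⟩
      exact ⟨n, Set.mem_Icc.mpr ⟨fun i => (hn i).1, fun i => (hn i).2⟩, rfl⟩
    exact ((Set.finite_Icc _ _).image _).subset hsubQ
  have hA : (Hfin.toFinset : Set G) = (H : Set G) := Hfin.coe_toFinset
  have hB : (hQfin.toFinset : Set G) = Q.toSet := hQfin.coe_toFinset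
  have hinj : ((Hfin.toFinset : Set G) ×ˢ (hQfin.toFinset : Set G)).InjOn
      (fun p => p.1 + p.2) := by
    rw [← Finset.card_add_iff]
    have hco : ((Hfin.toFinset + hQfin.toFinset : Finset G) : Set G) = (H:Set G) + Q.toSet := by
      rw [Finset.coe_add, hA, hB]
    calc (Hfin.toFinset + hQfin.toFinset).card
        = ((H:Set G) + Q.toSet).ncard := by rw [← Set.ncard_coe_finset, hco]
      _ = (H:Set G).ncard * Q.toSet.ncard := hcard
      _ = Hfin.toFinset.card * hQfin.toFinset.card := by
          rw [Set.ncard_eq_toFinset_card _ Hfin, Set.ncard_eq_toFinset_card _ hQfin]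
  have hq := hmemQ m hm
  have hq' := hmemQ m' hm'
  have hpair : ((h, ∑ i, m i • P.g i) : G×G) = (h', ∑ i, m' i • P.g i) := by
    refine hinj ?_ ?_ heq
    · exact Set.mem_prod.mpr ⟨Hfin.mem_toFinset.mpr hh, hQfin.mem_toFinset.mpr hq⟩
    · exact Set.mem_prod.mpr ⟨Hfin.mem_toFinset.mpr hh', hQfin.mem_toFinset.mpr hq'⟩
  have hsum : ∑ i, m i • P.g i = ∑ i, m' i • P.g i := congrArg Prod.snd hpair
  refine ⟨?_, congrArg Prod.fst hpair⟩
  refine Qprop m m' (fun i => ?_) (fun i => ?_) ?_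
  · rw [hQN i, hQN' i]; exact abs_le.mp (hm i)
  · rw [hQN i, hQN' i]; exact abs_le.mp (hm' i)
  · rw [hg0, zero_add, zero_add]; exact hsum

theorem stmt15 (G : Type) [AddCommGroup G] (X : Set G) (h0 : (0 : G) ∈ X)
    (k : ℕ) (hk : 0 < k) (H : AddSubgroup G) (d : ℕ) (P : GAPData G d)
    (hsym : P.IsSymmetric) (h2proper : IsTProperCosetProg 2 H P)
    (hsub : iterSumset k X ⊆ (H : Set G) + P.toSet) :
    X ⊆ (H : Set G) +
      {y : G | ∃ x : Fin d → ℤ, (∀ i, (k : ℤ) * |x i| ≤ 2 * P.N' i) ∧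
        y = ∑ i, x i • P.g i} := by
  intro x hx
  have hN' : ∀ i, 0 ≤ P.N' i := fun i => by
    have h1 := P.hle i; rw [hsym.2 i] at h1; linarith
  have hrep : ∀ j : ℕ, ∃ (h : G) (m : Fin d → ℤ), h ∈ H ∧ (∀ i, |m i| ≤ P.N' i) ∧
      (j ≤ k → (j:ℤ) • x = h + ∑ i, m i • P.g i) := by
    intro j
    by_cases hj : j ≤ k
    · obtain ⟨h, hh, y, ⟨m, hm, rfl⟩, hsum⟩ := hsub (smul_mem_iterSumset h0 hx k j hj)
      refine ⟨h, m, hh, fun i => ?_, fun _ => ?_⟩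
      · rw [abs_le]
        exact ⟨by rw [← hsym.2 i]; exact (hm i).1, (hm i).2⟩
      · rw [← hsum, hsym.1, zero_add]
    · exact ⟨0, 0, H.zero_mem, fun i => by simpa using hN' i, fun h => absurd h hj⟩
  choose hh mm hhH hmb hrepr using hrep
  have hdiff : ∀ (a b : ℕ), (hh a - hh b) + ∑ i, (mm a i - mm b i) • P.g i
      = (hh a + ∑ i, mm a i • P.g i) - (hh b + ∑ i, mm b i • P.g i) := by
    intro a b
    simp only [sub_smul, Finset.sum_sub_distrib]
    abel
  have hbd : ∀ a b i, |mm a i - mm b i| ≤ 2 * P.N' i := by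
    intro a b i
    calc |mm a i - mm b i| ≤ |mm a i| + |mm b i| := abs_sub _ _
      _ ≤ P.N' i + P.N' i := add_le_add (hmb a i) (hmb b i)
      _ = 2 * P.N' i := (two_mul _).symm
  have hstep : ∀ j, j + 1 ≤ k →
      mm (j+1) - mm j = mm 1 - mm 0 := by
    intro j hj
    have h1 : (1:ℤ) • x = hh 1 + ∑ i, mm 1 i • P.g i := by
      have := hrepr 1 hk; push_cast at this ⊢; exact this
    have h0' : (0:ℤ) • x = hh 0 + ∑ i, mm 0 i • P.g i := by
      have := hrepr 0 (Nat.zero_le k); push_cast at this ⊢; exact this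
    have hj1 : ((j:ℤ)+1) • x = hh (j+1) + ∑ i, mm (j+1) i • P.g i := by
      have := hrepr (j+1) hj; push_cast at this ⊢; exact this
    have hjx : (j:ℤ) • x = hh j + ∑ i, mm j i • P.g i := hrepr j (by omega)
    have e1 : (hh (j+1) - hh j) + ∑ i, (mm (j+1) i - mm j i) • P.g i
        = (hh 1 - hh 0) + ∑ i, (mm 1 i - mm 0 i) • P.g i := by
      rw [hdiff (j+1) j, hdiff 1 0, ← hj1, ← hjx, ← h1, ← h0']
      simp [add_smul]
    exact (key_unique hsym h2proper (sub_mem (hhH _) (hhH _)) (sub_mem (hhH _) (hhH _))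
      (fun i => hbd _ _ i) (fun i => hbd _ _ i) e1).1
  set u := mm 1 - mm 0 with hu
  have hind : ∀ j, j ≤ k → mm j = mm 0 + j • u := by
    intro j
    induction j with
    | zero => intro _; simp
    | succ n ih =>
      intro hn
      have h1 := hstep n hn
      have h2 := ih (by omega)
      have h3 : mm (n+1) = u + mm n := sub_eq_iff_eq_add.mp h1
      rw [h3, h2, succ_nsmul]
      abel
  have hbound : ∀ i, (k:ℤ) * |u i| ≤ 2 * P.N' i := by
    intro i
    have hk' := congrFun (hind k le_rfl) i
    have heqk : (k:ℤ) * u i = mm k i - mm 0 i := by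
      have : mm k i = mm 0 i + (k:ℤ) * u i := by
        simpa [nsmul_eq_mul] using hk'
      linarith
    calc (k:ℤ) * |u i| = |(k:ℤ) * u i| := by
          rw [abs_mul, abs_of_nonneg (by positivity : (0:ℤ) ≤ (k:ℤ))]
      _ = |mm k i - mm 0 i| := by rw [heqk]
      _ ≤ 2 * P.N' i := hbd k 0 i
  have h1 : (1:ℤ) • x = hh 1 + ∑ i, mm 1 i • P.g i := by
    have := hrepr 1 hk; push_cast at this ⊢; exact this
  have h0' : (0:ℤ) • x = hh 0 + ∑ i, mm 0 i • P.g i := by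
    have := hrepr 0 (Nat.zero_le k); push_cast at this ⊢; exact this
  have hxe : x = (hh 1 - hh 0) + ∑ i, (mm 1 i - mm 0 i) • P.g i := by
    rw [hdiff 1 0, ← h1, ← h0']
    simp
  exact ⟨hh 1 - hh 0, sub_mem (hhH 1) (hhH 0), ∑ i, u i • P.g i,
    ⟨u, hbound, rfl⟩, hxe.symm⟩
end

section
/- There exists an absolute constant c > 0 such that the following holds. Let n ≥ 1 and 1 ≤ m ≤ n be integers, set α = m/n, let A = {a₁, …, a_n} be a multiset of real numbers, and let ξ be a Bernoulli random variable with P(ξ = 1) = α and P(ξ = 0) = 1 − α. Then ρ_ξ(A) ≥ c · ρ*_m(A) / √(nα). -/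
/-- `ρ*_m(A)`: the largest concentration of sums of `m`-element sub(multi)sets of `A`. -/
noncomputable def rhoStarM (n m : ℕ) (A : Fin n → ℝ) : ℝ :=
  ⨆ a : ℝ, ({s : Finset (Fin n) | s.card = m ∧ ∑ i ∈ s, A i = a}.ncard : ℝ) /
    (n.choose m : ℝ)

/-- `ρ_ξ(A)` for `ξ` Bernoulli of parameter `α`: the largest concentration probability of
`∑ i, A i * x i` where the `x i` are iid, equal to `1` with probability `α` and to `0`
with probability `1 - α`. -/
noncomputable def bernoulliRho {n : ℕ} (A : Fin n → ℝ) (α : ℝ) : ℝ :=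
  ⨆ a : ℝ, ∑ x : Fin n → Bool, (∏ i, if x i then α else 1 - α) *
    (if (∑ i, if x i then A i else 0) = a then 1 else 0)


section stmt18aux
open Real Nat


lemma sq_lower (n : ℕ) (hn : 1 ≤ n) : Real.sqrt π ≤ Stirling.stirlingSeq n := by
  obtain ⟨k, rfl⟩ := Nat.exists_eq_add_of_le' hn
  have h := Stirling.tendsto_stirlingSeq_sqrt_pi
  rw [← Filter.tendsto_add_atTop_iff_nat 1] at h
  refine le_of_tendsto h ?_
  rw [Filter.eventually_atTop]
  exact ⟨k, fun j hj => Stirling.stirlingSeq'_antitone hj⟩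

lemma sq_upper (n : ℕ) (hn : 1 ≤ n) : Stirling.stirlingSeq n ≤ Real.exp 1 / Real.sqrt 2 := by
  rw [← Stirling.stirlingSeq_one]
  obtain ⟨k, rfl⟩ := Nat.exists_eq_add_of_le' hn
  exact Stirling.stirlingSeq'_antitone (Nat.zero_le k)

lemma fact_lower (n : ℕ) (hn : 1 ≤ n) :
    Real.sqrt π * (Real.sqrt (2*n) * ((n:ℝ)/Real.exp 1)^n) ≤ (n ! : ℝ) := by
  have hd : 0 < Real.sqrt (2*n) * ((n:ℝ)/Real.exp 1)^n := by
    have : (0:ℝ) < n := by exact_mod_cast hn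
    positivity
  have h := sq_lower n hn
  rw [Stirling.stirlingSeq, le_div_iff₀ hd] at h
  linarith [h]

lemma fact_upper (n : ℕ) (hn : 1 ≤ n) :
    (n ! : ℝ) ≤ (Real.exp 1 / Real.sqrt 2) * (Real.sqrt (2*n) * ((n:ℝ)/Real.exp 1)^n) := by
  have hd : 0 < Real.sqrt (2*n) * ((n:ℝ)/Real.exp 1)^n := by
    have : (0:ℝ) < n := by exact_mod_cast hn
    positivity
  have h := sq_upper n hn
  rw [Stirling.stirlingSeq, div_le_iff₀ hd] at h
  linarith [h]

lemma e_sq_le : Real.exp 1 ^ 2 ≤ 4 * (Real.sqrt 2 * Real.sqrt π) := by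
  have h1 : Real.exp 1 ≤ 2.7182818286 := Real.exp_one_lt_d9.le
  have h2 : (3.141592 : ℝ) < π := Real.pi_gt_d6
  have h3 : (2.5:ℝ) ≤ Real.sqrt 2 * Real.sqrt π := by
    rw [← Real.sqrt_mul (by norm_num)]
    rw [show (2.5:ℝ) = Real.sqrt (2.5^2) by rw [Real.sqrt_sq]; norm_num]
    apply Real.sqrt_le_sqrt; nlinarith
  nlinarith [Real.exp_pos 1]

lemma key_aux (m k : ℕ) (hm : 1 ≤ m) (hk : 1 ≤ k) :
    1/(4 * Real.sqrt m) ≤ (((m+k).choose m : ℝ)) * ((m:ℝ)/((m:ℝ)+k))^m * ((k:ℝ)/((m:ℝ)+k))^k := by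
  have hM : (0:ℝ) < m := by exact_mod_cast hm
  have hK : (0:ℝ) < k := by exact_mod_cast hk
  have hN : (0:ℝ) < (m:ℝ)+k := by linarith
  have hmf : (0:ℝ) < (m ! : ℝ) := by exact_mod_cast m.factorial_pos
  have hkf : (0:ℝ) < (k ! : ℝ) := by exact_mod_cast k.factorial_pos
  have hnf : (0:ℝ) < ((m+k)! : ℝ) := by exact_mod_cast (m+k).factorial_pos
  have hcast : ((m+k : ℕ):ℝ) = (m:ℝ)+k := by push_cast; ring
  have heq : (((m+k).choose m : ℝ)) * ((m:ℝ)/((m:ℝ)+k))^m * ((k:ℝ)/((m:ℝ)+k))^k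
      = (((m+k)! : ℝ) * ((m:ℝ)^m * (k:ℝ)^k)) / ((m ! : ℝ) * (k ! : ℝ) * ((m:ℝ)+k)^(m+k)) := by
    rw [Nat.cast_choose ℝ (Nat.le_add_right m k), Nat.add_sub_cancel_left]
    push_cast
    have hne : (m:ℝ)+k ≠ 0 := hN.ne'
    field_simp
    ring_nf
    rw [inv_pow, inv_pow]
    field_simp
  rw [heq, div_le_div_iff₀ (by positivity) (by positivity)]
  have hum := fact_upper m hm
  have huk := fact_upper k hk
  have hln := fact_lower (m+k) (by omega)
  rw [hcast] at hln
  have hesq := e_sq_le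
  have he : (0:ℝ) < Real.exp 1 := Real.exp_pos 1
  set E := Real.exp 1 with hE_def
  clear_value E
  clear hE_def
  have h2m : Real.sqrt (2*(m:ℝ)) = Real.sqrt 2 * Real.sqrt m := Real.sqrt_mul (by norm_num) _
  have h2k : Real.sqrt (2*(k:ℝ)) = Real.sqrt 2 * Real.sqrt k := Real.sqrt_mul (by norm_num) _
  have h2n : Real.sqrt (2*((m:ℝ)+k)) = Real.sqrt 2 * Real.sqrt ((m:ℝ)+k) :=
    Real.sqrt_mul (by norm_num) _
  set W : ℝ := (m:ℝ)^m * (k:ℝ)^k * ((m:ℝ)+k)^(m+k) / E ^ (m+k) with hW_def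
  have hW : (0:ℝ) ≤ W := by positivity
  have hs2 : (0:ℝ) < Real.sqrt 2 := by positivity
  have hUeq : ((E / Real.sqrt 2) * (Real.sqrt (2*(m:ℝ)) * ((m:ℝ)/E)^m))
      * ((E / Real.sqrt 2) * (Real.sqrt (2*(k:ℝ)) * ((k:ℝ)/E)^k))
      * ((m:ℝ)+k)^(m+k)
      = (E ^ 2 * (Real.sqrt m * Real.sqrt k)) * W := by
    rw [h2m, h2k, hW_def, div_pow, div_pow, pow_add]
    field_simp
    ring
  have hLeq : Real.sqrt π * (Real.sqrt (2*((m:ℝ)+k)) * (((m:ℝ)+k)/E)^(m+k))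
      * ((m:ℝ)^m * (k:ℝ)^k) * (4 * Real.sqrt m)
      = (4 * (Real.sqrt 2 * Real.sqrt π) * (Real.sqrt m * Real.sqrt ((m:ℝ)+k))) * W := by
    rw [h2n, hW_def, div_pow]
    field_simp
  calc 1 * ((m ! : ℝ) * (k ! : ℝ) * ((m:ℝ)+k)^(m+k))
      ≤ ((E / Real.sqrt 2) * (Real.sqrt (2*(m:ℝ)) * ((m:ℝ)/E)^m))
        * ((E / Real.sqrt 2) * (Real.sqrt (2*(k:ℝ)) * ((k:ℝ)/E)^k))
        * ((m:ℝ)+k)^(m+k) := by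
        rw [one_mul]
        gcongr
    _ = (E ^ 2 * (Real.sqrt m * Real.sqrt k)) * W := hUeq
    _ ≤ (4 * (Real.sqrt 2 * Real.sqrt π) * (Real.sqrt m * Real.sqrt ((m:ℝ)+k))) * W := by
        apply mul_le_mul_of_nonneg_right _ hW
        apply mul_le_mul hesq _ (by positivity) (by positivity)
        exact mul_le_mul_of_nonneg_left (Real.sqrt_le_sqrt (by linarith)) (Real.sqrt_nonneg _)
    _ = Real.sqrt π * (Real.sqrt (2*((m:ℝ)+k)) * (((m:ℝ)+k)/E)^(m+k))
        * ((m:ℝ)^m * (k:ℝ)^k) * (4 * Real.sqrt m) := hLeq.symm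
    _ ≤ (((m+k)! : ℝ) * ((m:ℝ)^m * (k:ℝ)^k)) * (4 * Real.sqrt m) := by gcongr

lemma key_binom (n m : ℕ) (hm : 1 ≤ m) (hmn : m ≤ n) :
    1/(4 * Real.sqrt m) ≤ (n.choose m : ℝ) * ((m:ℝ)/(n:ℝ))^m * (1 - (m:ℝ)/(n:ℝ))^(n-m) := by
  have hm0 : (0:ℝ) < m := by exact_mod_cast hm
  rcases eq_or_lt_of_le hmn with rfl | h
  · have hmne : (m:ℝ) ≠ 0 := ne_of_gt hm0
    rw [Nat.sub_self, Nat.choose_self, pow_zero, div_self hmne, one_pow]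
    simp only [Nat.cast_one, one_mul, mul_one]
    rw [div_le_one (by positivity)]
    have : (1:ℝ) ≤ Real.sqrt m := by
      rw [show (1:ℝ) = Real.sqrt 1 by simp]
      exact Real.sqrt_le_sqrt (by exact_mod_cast hm)
    linarith
  · obtain ⟨k, rfl⟩ := Nat.exists_eq_add_of_lt h
    have hk : 1 ≤ k + 1 := by omega
    simp only [Nat.add_assoc]
    have hkey := key_aux m (k+1) hm hk
    have hc : ((m + (k+1) : ℕ) : ℝ) = (m:ℝ) + ((k:ℝ)+1) := by push_cast; ring
    have hN : (0:ℝ) < (m:ℝ) + ((k:ℝ)+1) := by positivity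
    have h1 : 1 - (m:ℝ)/((m + (k+1) : ℕ) : ℝ) = ((k:ℝ)+1)/((m:ℝ)+((k:ℝ)+1)) := by
      rw [hc]; field_simp; ring
    have h2 : m + (k+1) - m = k + 1 := by omega
    rw [h1, h2, hc]
    convert hkey using 3 <;> push_cast <;> ring

theorem stmt18 :
    ∃ c : ℝ, 0 < c ∧ ∀ n m : ℕ, 1 ≤ n → 1 ≤ m → m ≤ n →
      ∀ (A : Fin n → ℝ) (α : ℝ), α = (m : ℝ) / (n : ℝ) →
        c * rhoStarM n m A / Real.sqrt ((n : ℝ) * α) ≤ bernoulliRho A α := by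
  classical
  refine ⟨1/4, by norm_num, ?_⟩
  intro n m hn hm hmn A α hα
  have hn0 : (0:ℝ) < n := by exact_mod_cast hn
  have hm0 : (0:ℝ) < m := by exact_mod_cast hm
  have hα0 : 0 ≤ α := by rw [hα]; positivity
  have hα1 : α ≤ 1 := by
    rw [hα, div_le_one hn0]; exact_mod_cast hmn
  have hβ0 : 0 ≤ 1 - α := by linarith
  have hαm : (n:ℝ) * α = m := by rw [hα]; field_simp
  rw [hαm]
  have hsm : 0 < Real.sqrt m := Real.sqrt_pos.mpr hm0
  have hC : (0:ℝ) < (n.choose m : ℝ) := by exact_mod_cast Nat.choose_pos hmn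
  -- the concentration function
  set F : ℝ → ℝ := fun a => ∑ x : Fin n → Bool, (∏ i, if x i then α else 1 - α) *
    (if (∑ i, if x i then A i else 0) = a then 1 else 0) with hF_def
  have hρ : bernoulliRho A α = ⨆ a, F a := rfl
  have hFnonneg : ∀ (a : ℝ) (x : Fin n → Bool), 0 ≤ (∏ i, if x i then α else 1 - α) *
      (if (∑ i, if x i then A i else 0) = a then 1 else 0) := by
    intro a x
    apply mul_nonneg
    · exact Finset.prod_nonneg fun i _ => by split <;> assumption
    · split <;> norm_num
  have hbdd : BddAbove (Set.range F) := by
    refine ⟨(2:ℝ)^n, ?_⟩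
    rintro _ ⟨a, rfl⟩
    calc F a ≤ ∑ _x : Fin n → Bool, (1:ℝ) := by
          apply Finset.sum_le_sum
          intro x _
          apply mul_le_one₀
          · exact Finset.prod_le_one (fun i _ => by split <;> linarith)
              (fun i _ => by split <;> linarith)
          · split <;> norm_num
          · split <;> norm_num
      _ = (2:ℝ)^n := by simp [Finset.card_univ]
  -- pointwise bound
  have key : ∀ a : ℝ,
      (({s : Finset (Fin n) | s.card = m ∧ ∑ i ∈ s, A i = a}.ncard : ℝ) / (n.choose m : ℝ))
        ≤ 4 * Real.sqrt m * F a := by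
    intro a
    set Sfin : Finset (Finset (Fin n)) :=
      Finset.univ.filter (fun s => s.card = m ∧ ∑ i ∈ s, A i = a) with hSfin_def
    have hset : {s : Finset (Fin n) | s.card = m ∧ ∑ i ∈ s, A i = a} = ↑Sfin := by
      ext s; simp [hSfin_def]
    rw [hset, Set.ncard_coe_finset]
    set T : Finset (Fin n → Bool) :=
      Finset.univ.filter (fun x => (Finset.univ.filter (fun i => x i)).card = m ∧
        (∑ i, if x i then A i else 0) = a) with hT_def
    have hcard : T.card = Sfin.card := by
      refine Finset.card_bij' (fun x _ => Finset.univ.filter (fun i => x i))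
        (fun s _ => fun i => decide (i ∈ s)) ?hi ?hj ?li ?ri
      case hi =>
        intro x hx
        simp only [hT_def, Finset.mem_filter, Finset.mem_univ, true_and] at hx
        simp only [hSfin_def, Finset.mem_filter, Finset.mem_univ, true_and]
        refine ⟨hx.1, ?_⟩
        rw [Finset.sum_filter]
        simpa using hx.2
      case hj =>
        intro s hs
        simp only [hSfin_def, Finset.mem_filter, Finset.mem_univ, true_and] at hs
        simp only [hT_def, Finset.mem_filter, Finset.mem_univ, true_and]
        constructor
        · rw [show (Finset.univ.filter (fun i => decide (i ∈ s) = true)) = s by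
            ext i; simp]
          exact hs.1
        · rw [show (∑ i, if decide (i ∈ s) = true then A i else 0) = ∑ i ∈ s, A i by
            simp [Finset.sum_ite_mem]]
          exact hs.2
      case li =>
        intro x hx
        funext i
        by_cases h : x i <;> simp [h]
      case ri =>
        intro s hs
        ext i; simp
    have hprod : ∀ x ∈ T, (∏ i, if x i then α else 1 - α) *
        (if (∑ i, if x i then A i else 0) = a then 1 else 0) = α^m * (1-α)^(n-m) := by
      intro x hx
      simp only [hT_def, Finset.mem_filter, Finset.mem_univ, true_and] at hx
      rw [if_pos hx.2, mul_one]
      rw [Finset.prod_ite]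
      rw [Finset.prod_const, Finset.prod_const]
      have h1 : (Finset.univ.filter (fun i => x i)).card = m := hx.1
      have h2 : (Finset.univ.filter (fun i => ¬ x i)).card = n - m := by
        have := Finset.card_filter_add_card_filter_not (s := Finset.univ)
          (p := fun i : Fin n => x i = true)
        simp only [Finset.card_univ, Fintype.card_fin] at this
        omega
      rw [h1, h2]
    have hFa : (T.card : ℝ) * (α^m * (1-α)^(n-m)) ≤ F a := by
      have hsub : ∑ x ∈ T, ((∏ i, if x i then α else 1 - α) *
          (if (∑ i, if x i then A i else 0) = a then 1 else 0)) ≤ F a := by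
        apply Finset.sum_le_sum_of_subset_of_nonneg (Finset.subset_univ T)
        intro x _ _
        exact hFnonneg a x
      calc (T.card : ℝ) * (α^m * (1-α)^(n-m))
          = ∑ _x ∈ T, (α^m * (1-α)^(n-m)) := by rw [Finset.sum_const, nsmul_eq_mul]
        _ = ∑ x ∈ T, ((∏ i, if x i then α else 1 - α) *
            (if (∑ i, if x i then A i else 0) = a then 1 else 0)) :=
            (Finset.sum_congr rfl hprod).symm
        _ ≤ F a := hsub
    have hkb := key_binom n m hm hmn
    rw [← hα] at hkb
    have h5 : 1 ≤ (n.choose m : ℝ) * α^m * (1-α)^(n-m) * (4 * Real.sqrt m) := by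
      rw [div_le_iff₀ (by positivity)] at hkb
      linarith
    calc (Sfin.card : ℝ) / (n.choose m : ℝ)
        ≤ (Sfin.card : ℝ) / (n.choose m : ℝ) *
            ((n.choose m : ℝ) * α^m * (1-α)^(n-m) * (4 * Real.sqrt m)) := by
          apply le_mul_of_one_le_right (by positivity) h5
      _ = 4 * Real.sqrt m * ((Sfin.card : ℝ) * (α^m * (1-α)^(n-m))) := by
          field_simp
      _ ≤ 4 * Real.sqrt m * F a := by
          rw [← hcard]
          exact mul_le_mul_of_nonneg_left hFa (by positivity)
  -- conclude
  have hfinal : rhoStarM n m A ≤ 4 * Real.sqrt m * bernoulliRho A α := by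
    apply ciSup_le
    intro a
    calc (({s : Finset (Fin n) | s.card = m ∧ ∑ i ∈ s, A i = a}.ncard : ℝ) / (n.choose m : ℝ))
        ≤ 4 * Real.sqrt m * F a := key a
      _ ≤ 4 * Real.sqrt m * bernoulliRho A α := by
          apply mul_le_mul_of_nonneg_left _ (by positivity)
          rw [hρ]
          exact le_ciSup hbdd a
  rw [div_le_iff₀ hsm]
  nlinarith [hfinal]


end stmt18aux
end

section
/- There exist an absolute constant K and an absolute constant s₀ such that the following holds. Let k and r be positive integers and let s ≥ s₀ be an integer. Then the number of k-tuples (x₁, …, x_k) of vectors x_i = (x_{i1}, …, x_{ir}) ∈ ℤ^r such that α_j ≥ 1 for every j and ∏_{j=1}^{r} α_j ≤ s, where α_j := max{|x_{1j}|, …, |x_{kj}|}, is at most K^{kr} · s^k · (log s)^{r−1}. -/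
open Finset

lemma pow_le_pow_add_aux (a b : ℕ) (hba : b ≤ a) : ∀ k : ℕ, a ^ k ≤ b ^ k + k * (a - b) * a ^ (k - 1)
  | 0 => by simp
  | (n+1) => by
    have ih := pow_le_pow_add_aux a b hba n
    have h2 : a * a ^ n ≤ a * (b ^ n + n * (a - b) * a ^ (n - 1)) :=
      Nat.mul_le_mul_left _ ih
    have h3 : a * (n * (a - b) * a ^ (n - 1)) = n * (a - b) * a ^ n := by
      rcases Nat.eq_zero_or_pos n with h | h
      · simp [h]
      · have hpow : a * a ^ (n - 1) = a ^ n := by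
          rw [← pow_succ']; congr 1; omega
        calc a * (n * (a - b) * a ^ (n - 1)) = n * (a-b) * (a * a ^ (n-1)) := by ring
          _ = n * (a - b) * a ^ n := by rw [hpow]
    have h4 : a * b ^ n ≤ b ^ (n+1) + (a - b) * a ^ n := by
      have he : a * b ^ n = b * b ^ n + (a - b) * b ^ n := by
        rw [← Nat.add_mul]; congr 1; omega
      rw [he, pow_succ']
      exact Nat.add_le_add_left (Nat.mul_le_mul_left _ (Nat.pow_le_pow_left hba n)) _
    calc a ^ (n+1) = a * a ^ n := by ring
      _ ≤ a * b ^ n + a * (n * (a - b) * a ^ (n - 1)) := by rw [← Nat.mul_add]; exact h2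
      _ ≤ (b ^ (n+1) + (a - b) * a ^ n) + n * (a - b) * a ^ n := Nat.add_le_add h4 (le_of_eq h3)
      _ = b ^ (n+1) + (n + 1) * (a - b) * a ^ ((n+1) - 1) := by
          simp only [Nat.add_sub_cancel]; ring

noncomputable def colBox (k m : ℕ) : Finset (Fin k → ℤ) :=
  Fintype.piFinset fun _ => Finset.Icc (-(m : ℤ)) m

lemma mem_colBox {k m : ℕ} {v : Fin k → ℤ} :
    v ∈ colBox k m ↔ ∀ i, (v i).natAbs ≤ m := by
  simp only [colBox, Fintype.mem_piFinset, Finset.mem_Icc]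
  constructor <;> intro h i <;> have := h i <;> omega

lemma colBox_card (k m : ℕ) : (colBox k m).card = (2 * m + 1) ^ k := by
  simp only [colBox, Fintype.card_piFinset, Int.card_Icc]
  rw [Finset.prod_const, Finset.card_univ, Fintype.card_fin]
  congr 1
  omega

noncomputable def col (k m : ℕ) : Finset (Fin k → ℤ) :=
  (colBox k m).filter fun v => Finset.univ.sup (fun i => (v i).natAbs) = m

lemma col_card_le (k m : ℕ) (hk : 0 < k) (hm : 1 ≤ m) :
    (col k m).card ≤ 6 ^ k * m ^ (k - 1) := by
  have hsub : col k m ⊆ colBox k m \ colBox k (m - 1) := by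
    intro v hv
    rw [col, Finset.mem_filter] at hv
    obtain ⟨hbox, hsup⟩ := hv
    rw [Finset.mem_sdiff]
    refine ⟨hbox, ?_⟩
    intro hmem
    rw [mem_colBox] at hmem
    have : Finset.univ.sup (fun i => (v i).natAbs) ≤ m - 1 :=
      Finset.sup_le fun i _ => hmem i
    omega
  have hcard : (colBox k m \ colBox k (m - 1)).card
      = (2 * m + 1) ^ k - (2 * (m - 1) + 1) ^ k := by
    rw [Finset.card_sdiff_of_subset, colBox_card, colBox_card]
    intro v hv
    rw [mem_colBox] at hv ⊢
    intro i
    exact le_trans (hv i) (by omega)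
  have hle := Finset.card_le_card hsub
  rw [hcard] at hle
  refine hle.trans ?_
  have h1 : (2 * (m-1) + 1 : ℕ) ≤ 2 * m + 1 := by omega
  have h2 := pow_le_pow_add_aux (2 * m + 1) (2 * (m - 1) + 1) h1 k
  have h3 : (2 * m + 1) - (2 * (m - 1) + 1) = 2 := by omega
  rw [h3] at h2
  have h4 : (2 * m + 1) ^ k - (2 * (m-1) + 1) ^ k ≤ k * 2 * (2 * m + 1) ^ (k - 1) := by omega
  refine h4.trans ?_
  have h5 : (2 * m + 1) ^ (k-1) ≤ (3 * m) ^ (k - 1) :=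
    Nat.pow_le_pow_left (by omega) _
  calc k * 2 * (2 * m + 1) ^ (k - 1) ≤ k * 2 * (3 * m) ^ (k - 1) :=
        Nat.mul_le_mul_left _ h5
    _ = (2 * k) * 3 ^ (k-1) * m ^ (k-1) := by rw [Nat.mul_pow]; ring
    _ ≤ 6 ^ k * m ^ (k - 1) := by
        refine Nat.mul_le_mul_right _ ?_
        have hk2 : k ≤ 2 ^ (k - 1) := by
          have := Nat.lt_two_pow_self (n := k - 1)
          omega
        calc 2 * k * 3 ^ (k - 1) ≤ 2 * 2 ^ (k - 1) * 3 ^ (k - 1) :=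
              Nat.mul_le_mul_right _ (Nat.mul_le_mul_left _ hk2)
          _ = 2 * 6 ^ (k - 1) := by rw [mul_assoc, ← Nat.mul_pow]
          _ ≤ 6 * 6 ^ (k - 1) := Nat.mul_le_mul_right _ (by norm_num)
          _ = 6 ^ k := by
              rw [← pow_succ']
              congr 1
              omega

lemma sum_inv_le_one_add_log (s : ℕ) : ∑ d ∈ Finset.Icc 1 s, (d : ℝ)⁻¹ ≤ 1 + Real.log s := by
  have h := harmonic_le_one_add_log s
  have he : ((harmonic s : ℚ) : ℝ) = ∑ d ∈ Finset.Icc 1 s, (d : ℝ)⁻¹ := by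
    rw [harmonic_eq_sum_Icc]
    push_cast
    rfl
  linarith [he ▸ h]

def divA (r s : ℕ) : Finset (Fin r → ℕ) :=
  (Fintype.piFinset fun _ => Finset.Icc 1 s).filter fun a => ∏ j, a j ≤ s

lemma mem_divA {r s : ℕ} {a : Fin r → ℕ} :
    a ∈ divA r s ↔ (∀ j, 1 ≤ a j ∧ a j ≤ s) ∧ ∏ j, a j ≤ s := by
  simp [divA, Fintype.mem_piFinset]

lemma divA_card_le : ∀ r, 1 ≤ r → ∀ s : ℕ, 1 ≤ s →
    ((divA r s).card : ℝ) ≤ s * (1 + Real.log s) ^ (r - 1) := by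
  intro r hr
  induction r, hr using Nat.le_induction with
  | base =>
    intro s hs
    have hsub : divA 1 s ⊆ Fintype.piFinset fun _ => Finset.Icc 1 s :=
      Finset.filter_subset _ _
    have := Finset.card_le_card hsub
    rw [Fintype.card_piFinset] at this
    simp only [Nat.card_Icc, Finset.prod_const, Finset.card_univ, Fintype.card_fin, pow_one] at this
    have h1 : (divA 1 s).card ≤ s := by omega
    have h2 : ((divA 1 s).card : ℝ) ≤ s := by exact_mod_cast h1
    simpa using h2
  | succ n hn ih =>
    intro s hs
    classical
    have hfib : ∀ a ∈ divA (n+1) s, a 0 ∈ Finset.Icc 1 s := by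
      intro a ha
      rw [mem_divA] at ha
      exact Finset.mem_Icc.mpr (ha.1 0)
    have hcard := Finset.card_eq_sum_card_fiberwise hfib
    -- each fiber injects into divA n (s / d)
    have hfiber : ∀ d ∈ Finset.Icc 1 s,
        ((divA (n+1) s).filter fun a => a 0 = d).card ≤ (divA n (s / d)).card := by
      intro d hd
      rw [Finset.mem_Icc] at hd
      apply Finset.card_le_card_of_injOn Fin.tail
      · intro a ha
        rw [Finset.mem_coe, Finset.mem_filter, mem_divA] at ha
        obtain ⟨⟨hbd, hprod⟩, h0⟩ := ha
        have hsplit : ∏ j, a j = a 0 * ∏ j : Fin n, Fin.tail a j :=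
          Fin.prod_univ_succ a
        have hP : (∏ j : Fin n, Fin.tail a j) * d ≤ s := by
          rw [hsplit, h0, mul_comm] at hprod
          exact hprod
        have hPle : ∏ j : Fin n, Fin.tail a j ≤ s / d :=
          (Nat.le_div_iff_mul_le hd.1).mpr hP
        rw [Finset.mem_coe, mem_divA]
        refine ⟨fun j => ⟨(hbd j.succ).1, ?_⟩, hPle⟩
        refine le_trans ?_ hPle
        exact Finset.single_le_prod' (fun i _ => (hbd i.succ).1) (Finset.mem_univ j)
      · intro a ha b hb hab
        simp only [Finset.coe_filter, Set.mem_setOf_eq] at ha hb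
        funext j
        refine Fin.cases ?_ ?_ j
        · rw [ha.2, hb.2]
        · intro i
          exact congrFun hab i
    have hdiv_pos : ∀ d ∈ Finset.Icc 1 s, 1 ≤ s / d := by
      intro d hd
      rw [Finset.mem_Icc] at hd
      exact (Nat.le_div_iff_mul_le hd.1).mpr (by rw [one_mul]; exact hd.2)
    have hlog0 : (0:ℝ) ≤ 1 + Real.log s := by
      have : (0:ℝ) ≤ Real.log s := Real.log_nonneg (by exact_mod_cast hs)
      linarith
    calc ((divA (n+1) s).card : ℝ)
        = ∑ d ∈ Finset.Icc 1 s, (((divA (n+1) s).filter fun a => a 0 = d).card : ℝ) := by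
          exact_mod_cast congrArg Nat.cast hcard
      _ ≤ ∑ d ∈ Finset.Icc 1 s, ((s:ℝ)/d) * (1 + Real.log s) ^ (n - 1) := by
          apply Finset.sum_le_sum
          intro d hd
          have h1 : (((divA (n+1) s).filter fun a => a 0 = d).card : ℝ)
              ≤ ((divA n (s / d)).card : ℝ) := by exact_mod_cast hfiber d hd
          refine h1.trans ((ih (s/d) (hdiv_pos d hd)).trans ?_)
          have hd' := Finset.mem_Icc.mp hd
          have hc1 : ((s / d : ℕ) : ℝ) ≤ (s:ℝ)/d := Nat.cast_div_le
          have hc2 : (1 + Real.log (s/d : ℕ)) ^ (n-1) ≤ (1 + Real.log s) ^ (n-1) := by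
            apply pow_le_pow_left₀
            · have : (0:ℝ) ≤ Real.log (s/d : ℕ) :=
                Real.log_nonneg (by exact_mod_cast hdiv_pos d hd)
              linarith
            · have : ((s/d : ℕ):ℝ) ≤ (s:ℝ) := by
                exact_mod_cast Nat.div_le_self s d
              have := Real.log_le_log
                (lt_of_lt_of_le one_pos (by exact_mod_cast hdiv_pos d hd)) this
              linarith
          have hnn : (0:ℝ) ≤ ((s / d : ℕ) : ℝ) := Nat.cast_nonneg _
          have hnn2 : (0:ℝ) ≤ (1 + Real.log (s/d:ℕ)) ^ (n-1) := by
            have : (0:ℝ) ≤ Real.log (s/d : ℕ) :=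
              Real.log_nonneg (by exact_mod_cast hdiv_pos d hd)
            positivity
          exact mul_le_mul hc1 hc2 hnn2 (by positivity)
      _ = (∑ d ∈ Finset.Icc 1 s, (d:ℝ)⁻¹) * ((s:ℝ) * (1 + Real.log s) ^ (n - 1)) := by
          rw [Finset.sum_mul]
          apply Finset.sum_congr rfl
          intro d _
          ring
      _ ≤ (1 + Real.log s) * ((s:ℝ) * (1 + Real.log s) ^ (n - 1)) := by
          apply mul_le_mul_of_nonneg_right (sum_inv_le_one_add_log s)
          positivity
      _ ≤ (s:ℝ) * (1 + Real.log s) ^ ((n+1) - 1) := by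
          refine le_of_eq ?_
          have hpow : (1 + Real.log s) * (1 + Real.log s) ^ (n - 1) = (1 + Real.log s) ^ n := by
            rw [← pow_succ']
            congr 1
            exact Nat.succ_pred_eq_of_pos hn
          have h1 : (n + 1) - 1 = n := by norm_num
          rw [h1, ← hpow]
          ring

/-- `maxAbs x j = α_j`, the maximum of `|x i j|` over `i`. -/
def maxAbs {k r : ℕ} (x : Fin k → Fin r → ℤ) (j : Fin r) : ℕ :=
  Finset.univ.sup fun i => (x i j).natAbs

theorem stmt19 :
    ∃ (K : ℝ) (s₀ : ℕ), 0 < K ∧ ∀ k r s : ℕ, 0 < k → 0 < r → s₀ ≤ s →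
      ({x : Fin k → Fin r → ℤ |
          (∀ j, 1 ≤ maxAbs x j) ∧ (∏ j, maxAbs x j) ≤ s}.ncard : ℝ) ≤
        K ^ (k * r) * (s : ℝ) ^ k * Real.log s ^ (r - 1) := by
  classical
  refine ⟨12, 3, by norm_num, ?_⟩
  intro k r s hk hr hs
  have hs1 : 1 ≤ s := by omega
  -- auxiliary: for x in the set, maxAbs x j ≤ s
  have hmax_le : ∀ x : Fin k → Fin r → ℤ, (∀ j, 1 ≤ maxAbs x j) → (∏ j, maxAbs x j) ≤ s →
      ∀ j, maxAbs x j ≤ s := by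
    intro x h1 h2 j
    exact le_trans (Finset.single_le_prod' (fun i _ => h1 i) (Finset.mem_univ j)) h2
  set F : Finset (Fin k → Fin r → ℤ) :=
    (Fintype.piFinset fun _ : Fin k =>
        Fintype.piFinset fun _ : Fin r => Finset.Icc (-(s:ℤ)) s).filter
      (fun x => (∀ j, 1 ≤ maxAbs x j) ∧ (∏ j, maxAbs x j) ≤ s) with hF
  have hTF : {x : Fin k → Fin r → ℤ |
      (∀ j, 1 ≤ maxAbs x j) ∧ (∏ j, maxAbs x j) ≤ s} = ↑F := by
    ext x
    simp only [Set.mem_setOf_eq, hF, Finset.coe_filter, Finset.mem_coe, Finset.mem_filter,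
      Fintype.mem_piFinset, Finset.mem_Icc]
    constructor
    · rintro ⟨h1, h2⟩
      refine ⟨fun i j => ?_, h1, h2⟩
      have hle : (x i j).natAbs ≤ maxAbs x j := Finset.le_sup (f := fun i => (x i j).natAbs) (Finset.mem_univ i)
      have := le_trans hle (hmax_le x h1 h2 j)
      omega
    · rintro ⟨_, h1, h2⟩
      exact ⟨h1, h2⟩
  rw [hTF, Set.ncard_coe_finset]
  -- fiberwise count over the divisor set
  have hfib : ∀ x ∈ F, (fun j => maxAbs x j) ∈ divA r s := by
    intro x hx
    rw [hF, Finset.mem_filter] at hx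
    obtain ⟨_, h1, h2⟩ := hx
    rw [mem_divA]
    exact ⟨fun j => ⟨h1 j, hmax_le x h1 h2 j⟩, h2⟩
  have hcard := Finset.card_eq_sum_card_fiberwise hfib
  -- fiber bound
  have hfiber : ∀ a ∈ divA r s,
      (F.filter fun x => (fun j => maxAbs x j) = a).card ≤ 6 ^ (k * r) * s ^ (k - 1) := by
    intro a ha
    rw [mem_divA] at ha
    have step1 : (F.filter fun x => (fun j => maxAbs x j) = a).card
        ≤ (Fintype.piFinset fun j => col k (a j)).card := by
      apply Finset.card_le_card_of_injOn (fun x => fun j i => x i j)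
      · intro x hx
        rw [Finset.mem_coe, Finset.mem_filter] at hx
        obtain ⟨_, hxa⟩ := hx
        rw [Finset.mem_coe, Fintype.mem_piFinset]
        intro j
        have haj : maxAbs x j = a j := congrFun hxa j
        rw [col, Finset.mem_filter]
        constructor
        · rw [mem_colBox]
          intro i
          have : (x i j).natAbs ≤ maxAbs x j := Finset.le_sup (f := fun i => (x i j).natAbs) (Finset.mem_univ i)
          show (x i j).natAbs ≤ a j
          omega
        · exact haj
      · intro x hx y hy hxy
        funext i j
        exact congrFun (congrFun hxy j) i
    refine step1.trans ?_
    rw [Fintype.card_piFinset]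
    calc ∏ j, (col k (a j)).card ≤ ∏ j, 6 ^ k * (a j) ^ (k - 1) := by
          apply Finset.prod_le_prod'
          intro j _
          exact col_card_le k (a j) hk (ha.1 j).1
      _ = (6 ^ k) ^ r * (∏ j, a j) ^ (k - 1) := by
          rw [Finset.prod_mul_distrib, Finset.prod_const, Finset.card_univ, Fintype.card_fin,
            Finset.prod_pow]
      _ ≤ 6 ^ (k * r) * s ^ (k - 1) := by
          rw [← pow_mul]
          exact Nat.mul_le_mul_left _ (Nat.pow_le_pow_left ha.2 _)
  have hFcard : F.card ≤ (divA r s).card * (6 ^ (k * r) * s ^ (k - 1)) := by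
    rw [hcard]
    calc ∑ a ∈ divA r s, (F.filter fun x => (fun j => maxAbs x j) = a).card
        ≤ ∑ _a ∈ divA r s, 6 ^ (k * r) * s ^ (k - 1) := Finset.sum_le_sum hfiber
      _ = (divA r s).card * (6 ^ (k * r) * s ^ (k - 1)) := by
          rw [Finset.sum_const, smul_eq_mul]
  -- now go to ℝ
  have hlog1 : (1:ℝ) ≤ Real.log s := by
    have h3 : Real.exp 1 ≤ 3 := by
      have := Real.exp_one_lt_d9
      linarith
    have : (1:ℝ) ≤ Real.log 3 := (Real.le_log_iff_exp_le (by norm_num)).mpr h3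
    refine this.trans (Real.log_le_log (by norm_num) ?_)
    exact_mod_cast hs
  have hlog0 : (0:ℝ) ≤ Real.log s := by linarith
  have hdivR : ((divA r s).card : ℝ) ≤ s * (1 + Real.log s) ^ (r - 1) :=
    divA_card_le r hr s hs1
  have hcast : (F.card : ℝ) ≤ ((divA r s).card : ℝ) * (6 ^ (k * r) * (s:ℝ) ^ (k - 1)) := by
    have := hFcard
    calc (F.card : ℝ) ≤ (((divA r s).card * (6 ^ (k * r) * s ^ (k - 1)) : ℕ) : ℝ) := by
          exact_mod_cast this
      _ = ((divA r s).card : ℝ) * (6 ^ (k * r) * (s:ℝ) ^ (k - 1)) := by push_cast; ring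
  refine hcast.trans ?_
  have hsR0 : (0:ℝ) ≤ s := Nat.cast_nonneg _
  have hsR1 : (1:ℝ) ≤ s := by exact_mod_cast hs1
  calc ((divA r s).card : ℝ) * (6 ^ (k * r) * (s:ℝ) ^ (k - 1))
      ≤ ((s:ℝ) * (1 + Real.log s) ^ (r - 1)) * (6 ^ (k * r) * (s:ℝ) ^ (k - 1)) := by
        apply mul_le_mul_of_nonneg_right hdivR
        positivity
    _ ≤ ((s:ℝ) * (2 * Real.log s) ^ (r - 1)) * (6 ^ (k * r) * (s:ℝ) ^ (k - 1)) := by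
        apply mul_le_mul_of_nonneg_right (mul_le_mul_of_nonneg_left ?_ hsR0)
        · positivity
        · apply pow_le_pow_left₀ (by linarith)
          linarith
    _ = (6:ℝ) ^ (k * r) * 2 ^ (r - 1) * ((s:ℝ) * (s:ℝ) ^ (k - 1)) * Real.log s ^ (r - 1) := by
        rw [mul_pow]
        ring
    _ ≤ (6:ℝ) ^ (k * r) * 2 ^ (k * r) * ((s:ℝ) ^ k) * Real.log s ^ (r - 1) := by
        have h2 : (2:ℝ) ^ (r - 1) ≤ 2 ^ (k * r) := by
          apply pow_le_pow_right₀ (by norm_num)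
          have : r ≤ k * r := Nat.le_mul_of_pos_left r hk
          omega
        have hss : (s:ℝ) * (s:ℝ) ^ (k - 1) = (s:ℝ) ^ k := by
          rw [← pow_succ']
          congr 1
          omega
        rw [hss]
        apply mul_le_mul_of_nonneg_right _ (by positivity)
        apply mul_le_mul_of_nonneg_right _ (by positivity)
        exact mul_le_mul_of_nonneg_left h2 (by positivity)
    _ = (12:ℝ) ^ (k * r) * (s:ℝ) ^ k * Real.log s ^ (r - 1) := by
        rw [← mul_pow]
        norm_num
end
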